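/- Let (A,·,∘) be a transposed Novikov-Poisson algebra. Then the following are equivalent: (a) (A,·,∘) is a Novikov-Poisson algebra; (b) (x·y)∘z = z∘(x·y) for all x,y,z ∈ A; (c) for every x ∈ A, left ·-multiplication by x lies in the centroid of (A,∘); (d) for every x ∈ A, left ∘-multiplication by x lies in the centroid of (A,·). -/
import Mathlib


/-- For a transposed Novikov-Poisson algebra, the four conditions
(a) Novikov-Poisson, (b) (x·y)∘z = z∘(x·y), (c) L·(x) ∈ centroid of (A,∘),
(d) L∘(x) ∈ centroid of (A,·) are equivalent. -/
theorem stmt6 {k A : Type*} [Field k] [AddCommGroup A] [Module k A]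
    (hchar : (2:k) ≠ 0)
    (mul cir : A →ₗ[k] A →ₗ[k] A)
    (hcomm : ∀ x y : A, mul x y = mul y x)
    (hassoc : ∀ x y z : A, mul (mul x y) z = mul x (mul y z))
    (hnov1 : ∀ x y z : A, cir (cir x y) z = cir (cir x z) y)
    (hnov2 : ∀ x y z : A, cir (cir x y) z - cir x (cir y z) = cir (cir y x) z - cir y (cir x z))
    (htnp1 : ∀ x y z : A, cir (mul x y) z = cir (mul x z) y)
    (htnp2 : ∀ x y z : A, (2:k) • mul z (cir x y) = cir (mul z x) y + cir x (mul z y)) :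
    (((∀ x y z : A, cir (mul x y) z = mul x (cir y z)) ∧
      (∀ x y z : A, mul (cir x y) z - mul (cir y x) z = cir x (mul y z) - cir y (mul x z)))
     ↔ (∀ x y z : A, cir (mul x y) z = cir z (mul x y))) ∧
    ((∀ x y z : A, cir (mul x y) z = cir z (mul x y))
     ↔ (∀ x y z : A, mul x (cir y z) = cir (mul x y) z ∧ mul x (cir y z) = cir y (mul x z))) ∧
    ((∀ x y z : A, mul x (cir y z) = cir (mul x y) z ∧ mul x (cir y z) = cir y (mul x z))
     ↔ (∀ x y z : A, cir x (mul y z) = mul (cir x y) z ∧ cir x (mul y z) = mul y (cir x z))) := by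
  -- rewritten form of htnp2
  have key : ∀ x y z : A, (2:k) • mul x (cir y z) = cir (mul x y) z + cir y (mul x z) :=
    fun x y z => htnp2 y z x
  have cancel : ∀ a b : A, (2:k) • a = (2:k) • b → a = b := by
    intro a b h
    have := congrArg (fun t => (2:k)⁻¹ • t) h
    simpa [inv_smul_smul₀ hchar] using this
  -- (b) → (c)
  have c_of_b : (∀ x y z : A, cir (mul x y) z = cir z (mul x y)) →
      ∀ x y z : A, mul x (cir y z) = cir (mul x y) z ∧ mul x (cir y z) = cir y (mul x z) := by
    intro hb x y z
    have h1 : cir y (mul x z) = cir (mul x y) z := by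
      rw [← hb x z y, htnp1]
    have h2 : mul x (cir y z) = cir (mul x y) z := by
      apply cancel
      rw [key, h1, two_smul]
    exact ⟨h2, h2.trans h1.symm⟩
  -- (c) → (b)
  have b_of_c : (∀ x y z : A, mul x (cir y z) = cir (mul x y) z ∧
        mul x (cir y z) = cir y (mul x z)) →
      ∀ x y z : A, cir (mul x y) z = cir z (mul x y) := by
    intro hc x y z
    have h1 := (hc x z y).1
    have h2 := (hc x z y).2
    rw [← h2, h1, htnp1]
  -- (c) → (d)
  have d_of_c : (∀ x y z : A, mul x (cir y z) = cir (mul x y) z ∧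
        mul x (cir y z) = cir y (mul x z)) →
      ∀ x y z : A, cir x (mul y z) = mul (cir x y) z ∧ cir x (mul y z) = mul y (cir x z) := by
    intro hc x y z
    have h2 : cir x (mul y z) = mul y (cir x z) := ((hc y x z).2).symm
    have h1 : cir x (mul y z) = mul (cir x y) z := by
      rw [hcomm (cir x y) z, (hc z x y).2, hcomm y z]
    exact ⟨h1, h2⟩
  -- (d) → (c)
  have c_of_d : (∀ x y z : A, cir x (mul y z) = mul (cir x y) z ∧
        cir x (mul y z) = mul y (cir x z)) →
      ∀ x y z : A, mul x (cir y z) = cir (mul x y) z ∧ mul x (cir y z) = cir y (mul x z) := by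
    intro hd x y z
    have h2 : mul x (cir y z) = cir y (mul x z) := ((hd y x z).2).symm
    have h1 : mul x (cir y z) = cir (mul x y) z := by
      have h := key x y z
      rw [← h2, two_smul] at h
      exact add_right_cancel h
    exact ⟨h1, h2⟩
  refine ⟨⟨fun ⟨ha1, _⟩ x y z => ?_, fun hb => ?_⟩, ⟨c_of_b, b_of_c⟩, ⟨d_of_c, c_of_d⟩⟩
  · -- (a) → (b), using only ha1
    have hc2 : ∀ x y z : A, mul x (cir y z) = cir y (mul x z) := by
      intro x y z
      have h := key x y z
      rw [ha1 x y z] at h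
      rw [two_smul] at h
      exact add_left_cancel h
    calc cir (mul x y) z = cir (mul x z) y := htnp1 x y z
      _ = mul x (cir z y) := ha1 x z y
      _ = cir z (mul x y) := hc2 x z y
  · -- (b) → (a)
    have hc := c_of_b hb
    have hd := d_of_c hc
    refine ⟨fun x y z => ((hc x y z).1).symm, fun x y z => ?_⟩
    rw [(hd x y z).1, (hd y x z).1]
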